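/- Let a, b, c, d be points on the unit circle occurring in this cyclic order, and let u be a point of the unit circle on the arc between a and b not containing c and d (with u distinct from a, b, c, d and ab ≠ ud, ab ≠ uc). Set a₂ := LIS[a,b,u,d] and b₂ := LIS[a,b,u,c]. Then (|a−b₂|·|a₂−b|)/(|a−a₂|·|b₂−b|) = (|a−c|·|b−d|)/(|a−d|·|b−c|); in particular this quantity, which equals exp(h(a₂,b₂)) for the Hilbert metric of the unit disk, is independent of u. -/

import Mathlib

open Complex

lemma exp_ne_exp_of_lt (s t : ℝ) (h1 : s < t) (h2 : t < s + 2 * Real.pi) :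
    Complex.exp (s * Complex.I) ≠ Complex.exp (t * Complex.I) := by
  intro h
  rw [Complex.exp_eq_exp_iff_exists_int] at h
  obtain ⟨n, hn⟩ := h
  have key : ((s - t - n * (2 * Real.pi) : ℝ) : ℂ) * Complex.I = 0 := by
    push_cast
    linear_combination hn
  have h0 : ((s - t - n * (2 * Real.pi) : ℝ) : ℂ) = 0 :=
    (mul_eq_zero.mp key).resolve_right Complex.I_ne_zero
  have hr : s - t - n * (2 * Real.pi) = 0 := by exact_mod_cast h0
  have hπ := Real.pi_pos
  have hn0 : (n : ℝ) < 0 := by nlinarith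
  have hn1 : n ≤ -1 := by
    have : n < 0 := by exact_mod_cast hn0
    omega
  have hn1' : (n : ℝ) ≤ -1 := by exact_mod_cast hn1
  nlinarith

/-- Corollary 3.25 (1): for `a, b, c, d` in this cyclic order on the unit circle, `u` on the
arc between `a` and `b` not containing `c, d`, with `a₂ = LIS[a,b,u,d]` and
`b₂ = LIS[a,b,u,c]`, the quantity
`(|a−b₂||a₂−b|)/(|a−a₂||b₂−b|) = exp h(a₂,b₂)` equals `(|a−c||b−d|)/(|a−d||b−c|)`;
in particular, it is independent of `u`. -/
theorem stmt_15 (a b c d u : ℂ) (θ₁ θ₂ θ₃ θ₄ θ : ℝ)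
    (h12 : θ₁ < θ₂) (h23 : θ₂ < θ₃) (h34 : θ₃ < θ₄) (h41 : θ₄ < θ₁ + 2 * Real.pi)
    (ha : a = Complex.exp (θ₁ * Complex.I)) (hb : b = Complex.exp (θ₂ * Complex.I))
    (hc : c = Complex.exp (θ₃ * Complex.I)) (hd : d = Complex.exp (θ₄ * Complex.I))
    (hu : u = Complex.exp (θ * Complex.I)) (hθ1 : θ₁ < θ) (hθ2 : θ < θ₂)
    (h1 : a * b ≠ u * d) (h2 : a * b ≠ u * c) :
    let a₂ : ℂ := (a * b * (u + d) - u * d * (a + b)) / (a * b - u * d)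
    let b₂ : ℂ := (a * b * (u + c) - u * c * (a + b)) / (a * b - u * c)
    (‖a - b₂‖ * ‖a₂ - b‖) /
        (‖a - a₂‖ * ‖b₂ - b‖) =
      (‖a - c‖ * ‖b - d‖) /
        (‖a - d‖ * ‖b - c‖) := by
  intro a₂ b₂
  have hπ := Real.pi_pos
  have hX : a * b - u * d ≠ 0 := sub_ne_zero.mpr h1
  have hY : a * b - u * c ≠ 0 := sub_ne_zero.mpr h2
  have hau : a ≠ u := by rw [ha, hu]; exact exp_ne_exp_of_lt _ _ hθ1 (by linarith)
  have hub : u ≠ b := by rw [hu, hb]; exact exp_ne_exp_of_lt _ _ hθ2 (by linarith)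
  have hac : a ≠ c := by rw [ha, hc]; exact exp_ne_exp_of_lt _ _ (by linarith) (by linarith)
  have had : a ≠ d := by rw [ha, hd]; exact exp_ne_exp_of_lt _ _ (by linarith) (by linarith)
  have hbc : b ≠ c := by rw [hb, hc]; exact exp_ne_exp_of_lt _ _ (by linarith) (by linarith)
  have hbd : b ≠ d := by rw [hb, hd]; exact exp_ne_exp_of_lt _ _ (by linarith) (by linarith)
  have ha0 : a ≠ 0 := by rw [ha]; exact Complex.exp_ne_zero _
  have hb0 : b ≠ 0 := by rw [hb]; exact Complex.exp_ne_zero _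
  have ea : a₂ = (a * b * (u + d) - u * d * (a + b)) / (a * b - u * d) := rfl
  have eb : b₂ = (a * b * (u + c) - u * c * (a + b)) / (a * b - u * c) := rfl
  have e1 : a - a₂ = b * (a - u) * (a - d) / (a * b - u * d) := by
    rw [ea]; field_simp; ring
  have e2 : a₂ - b = -(a * (b - u) * (b - d)) / (a * b - u * d) := by
    rw [ea]; field_simp; ring
  have e3 : a - b₂ = b * (a - u) * (a - c) / (a * b - u * c) := by
    rw [eb]; field_simp; ring
  have e4 : b₂ - b = -(a * (b - u) * (b - c)) / (a * b - u * c) := by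
    rw [eb]; field_simp; ring
  rw [e1, e2, e3, e4]
  have habs : ∀ z : ℂ, z ≠ 0 → ‖z‖ ≠ 0 := fun z hz => norm_ne_zero_iff.mpr hz
  simp only [norm_div, norm_mul, norm_neg]
  have h5 : ‖a - u‖ ≠ 0 := habs _ (sub_ne_zero.mpr hau)
  have h6 : ‖b - u‖ ≠ 0 := habs _ (sub_ne_zero.mpr hub.symm)
  have h7 : ‖a - c‖ ≠ 0 := habs _ (sub_ne_zero.mpr hac)
  have h8 : ‖a - d‖ ≠ 0 := habs _ (sub_ne_zero.mpr had)
  have h9 : ‖b - c‖ ≠ 0 := habs _ (sub_ne_zero.mpr hbc)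
  have h10 : ‖b - d‖ ≠ 0 := habs _ (sub_ne_zero.mpr hbd)
  have hXa : ‖a * b - u * d‖ ≠ 0 := habs _ hX
  have hYa : ‖a * b - u * c‖ ≠ 0 := habs _ hY
  have ha0' : ‖a‖ ≠ 0 := habs _ ha0
  have hb0' : ‖b‖ ≠ 0 := habs _ hb0
  field_simp
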